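/- Let L be a finite graded diamond lattice of rank d+1 in which, for every element a of rank k, the graph with vertices the rank k-1 elements below a and edges the rank k-2 elements expressible as meets of two such elements is connected. Then L is flag connected: its flag graph is connected. -/

import Mathlib

/-- Adjacency of flags: they differ in exactly one element. -/
def flagAdj {α : Type*} [PartialOrder α] (F F' : Flag α) : Prop :=
  F ≠ F' ∧ ((F : Set α) \ (F' : Set α)).ncard = 1 ∧ ((F' : Set α) \ (F : Set α)).ncard = 1

/-- The flag graph of a poset. -/
def flagGraph (α : Type*) [PartialOrder α] : SimpleGraph (Flag α) where
  Adj := flagAdj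
  symm := ⟨fun _ _ h => ⟨h.1.symm, h.2.2, h.2.1⟩⟩
  loopless := ⟨fun _ h => h.1 rfl⟩

/-- The diamond condition: every rank-2 interval has exactly 4 elements. -/
def IsDiamond (α : Type*) [PartialOrder α] [GradeOrder ℕ α] : Prop :=
  ∀ a b : α, a ≤ b → grade ℕ b = grade ℕ a + 2 → (Set.Icc a b).ncard = 4

/-- For an element `a`, the graph whose vertices are the elements covered by `a` and
where two such elements are adjacent when their meet has rank two less than `a`. -/
def coverGraph {α : Type*} [Lattice α] [GradeOrder ℕ α] (a : α) :
    SimpleGraph {b : α // b ⋖ a} where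
  Adj b b' := b ≠ b' ∧ grade ℕ ((b : α) ⊓ (b' : α)) + 2 = grade ℕ a
  symm := ⟨fun _ _ h => ⟨h.1.symm, by rw [inf_comm]; exact h.2⟩⟩
  loopless := ⟨fun _ h => h.1 rfl⟩

section Aux

variable {α : Type*} [Fintype α] [Lattice α] [BoundedOrder α] [GradeBoundedOrder ℕ α]

/-- Two elements of a chain with the same grade are equal. -/
lemma aux_eq_of_chain_grade {t : Set α} (ht : IsChain (· ≤ ·) t) {x y : α}
    (hx : x ∈ t) (hy : y ∈ t) (h : grade ℕ x = grade ℕ y) : x = y := by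
  rcases ht.total hx hy with hle | hle
  · rcases lt_or_eq_of_le hle with hlt | rfl
    · have : grade ℕ x < grade ℕ y := grade_strictMono (𝕆 := ℕ) hlt
      omega
    · rfl
  · rcases lt_or_eq_of_le hle with hlt | rfl
    · have : grade ℕ y < grade ℕ x := grade_strictMono (𝕆 := ℕ) hlt
      omega
    · rfl

lemma aux_covBy_of_grade {x y : α} (h : x < y) (hg : grade ℕ y = grade ℕ x + 1) : x ⋖ y := by
  refine ⟨h, fun z hxz hzy => ?_⟩
  have h1 : grade ℕ x < grade ℕ z := grade_strictMono (𝕆 := ℕ) hxz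
  have h2 : grade ℕ z < grade ℕ y := grade_strictMono (𝕆 := ℕ) hzy
  omega

lemma aux_grade_covBy {x y : α} (h : x ⋖ y) : grade ℕ x + 1 = grade ℕ y :=
  Order.covBy_iff_add_one_eq.mp (h.grade ℕ)

/-- A flag contains an element of every grade up to the top grade. -/
lemma aux_flag_exists_grade (F : Flag α) :
    ∀ j, j ≤ grade ℕ (⊤ : α) → ∃ x ∈ F, grade ℕ x = j := by
  intro j
  induction j with
  | zero => intro _; exact ⟨⊥, F.bot_mem, grade_bot⟩
  | succ j ihj =>
    intro hj
    obtain ⟨x, hxF, hxg⟩ := ihj (by omega)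
    have hxt : x ≠ ⊤ := fun h => by rw [h] at hxg; omega
    set S : Set α := {y : α | y ∈ F ∧ x < y} with hS
    have hStop : (⊤ : α) ∈ S := ⟨F.top_mem, lt_of_le_of_ne le_top hxt⟩
    obtain ⟨y, hyS, hymin⟩ :=
      Set.Finite.exists_minimalFor id S (Set.toFinite S) ⟨⊤, hStop⟩
    refine ⟨y, hyS.1, ?_⟩
    have hcov : x ⋖ y := by
      refine ⟨hyS.2, fun z hxz hzy => ?_⟩
      have hzF : z ∈ F := by
        rw [Flag.mem_iff_forall_le_or_ge]
        intro w hw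
        rcases F.le_or_le hxF hw with hxw | hwx
        · rcases F.le_or_le hyS.1 hw with hyw | hwy
          · exact Or.inl (le_trans hzy.le hyw)
          · rcases eq_or_lt_of_le hxw with rfl | hxw'
            · exact Or.inr hxz.le
            · have hwS : w ∈ S := ⟨hw, hxw'⟩
              have : id y = id w := le_antisymm (hymin hwS hwy) hwy
              simp only [id] at this
              subst this
              exact Or.inl hzy.le
        · exact Or.inr (le_trans hwx hxz.le)
      have hzS : z ∈ S := ⟨hzF, hxz⟩
      have : id y = id z := le_antisymm (hymin hzS hzy.le) hzy.le
      simp only [id] at this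
      exact absurd this hzy.ne'
    have := aux_grade_covBy hcov
    omega

/-- A chain hitting every grade is a maximal chain. -/
lemma aux_maxChain_of_grades {s : Set α} (hc : IsChain (· ≤ ·) s)
    (hs : ∀ j, j ≤ grade ℕ (⊤ : α) → ∃ x ∈ s, grade ℕ x = j) :
    IsMaxChain (· ≤ ·) s := by
  refine ⟨hc, fun t ht hst => ?_⟩
  refine Set.Subset.antisymm hst (fun z hz => ?_)
  obtain ⟨x, hxs, hxg⟩ := hs (grade ℕ z) (grade_mono le_top)
  have : x = z := aux_eq_of_chain_grade ht (hst hxs) hz hxg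
  exact this ▸ hxs

/-- Below any element there is a chain hitting every grade up to the element's grade. -/
lemma aux_exists_lower_chain (x : α) :
    ∃ s : Set α, IsChain (· ≤ ·) s ∧ (∀ y ∈ s, y ≤ x) ∧
      ∀ j, j ≤ grade ℕ x → ∃ y ∈ s, grade ℕ y = j := by
  suffices H : ∀ n (x : α), grade ℕ x = n → ∃ s : Set α, IsChain (· ≤ ·) s ∧
      (∀ y ∈ s, y ≤ x) ∧ ∀ j, j ≤ grade ℕ x → ∃ y ∈ s, grade ℕ y = j by
    exact H _ x rfl
  intro n
  induction n using Nat.strong_induction_on with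
  | _ n ihn =>
  intro x hn
  match n, hn, ihn with
  | 0, hn, _ =>
    refine ⟨{x}, Set.subsingleton_singleton.isChain, by simp, ?_⟩
    intro j hj
    exact ⟨x, rfl, by omega⟩
  | (n + 1), hn, ihn =>
    have hxbot : x ≠ ⊥ := fun h => by
      have hb0 : grade ℕ (⊥ : α) = 0 := grade_bot
      rw [h] at hn
      omega
    set S : Set α := {y : α | y < x} with hSdef
    have hSne : (⊥ : α) ∈ S := bot_lt_iff_ne_bot.mpr hxbot
    obtain ⟨y, hyS, hymax⟩ :=
      Set.Finite.exists_maximalFor id S (Set.toFinite S) ⟨⊥, hSne⟩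
    have hcov : y ⋖ x := by
      refine ⟨hyS, fun z hyz hzx => ?_⟩
      have : id y = id z := (le_antisymm (hymax hzx hyz.le) hyz.le).symm
      simp only [id] at this
      exact absurd this hyz.ne
    have hyg : grade ℕ y = n := by have := aux_grade_covBy hcov; omega
    obtain ⟨s, hsc, hsle, hsg'⟩ := ihn n (by omega) y hyg
    have hsg : ∀ j, j ≤ grade ℕ y → ∃ w ∈ s, grade ℕ w = j := by
      intro j hj; exact hsg' j (by omega)
    refine ⟨insert x s, ?_, ?_, ?_⟩
    · exact hsc.insert (fun b hb _ => Or.inr (le_trans (hsle b hb) hcov.1.le))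
    · rintro w (rfl | hw)
      · exact le_refl _
      · exact le_trans (hsle w hw) hcov.1.le
    · intro j hj
      rcases Nat.lt_or_ge j (n + 1) with hj' | hj'
      · obtain ⟨w, hws, hwg⟩ := hsg j (by omega)
        exact ⟨w, Or.inr hws, hwg⟩
      · exact ⟨x, Or.inl rfl, by omega⟩

end Aux

/-- If in a finite graded diamond lattice of rank `d + 1` the graph of elements covered
by each element `a` (with edges given by meets of rank two below `a`) is connected, then
the lattice is flag connected. -/
theorem stmt14 {α : Type*} [Fintype α] [Lattice α] [BoundedOrder α] [GradeBoundedOrder ℕ α]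
    (d : ℕ) (hrank : grade ℕ (⊤ : α) = d + 1) (hdiamond : IsDiamond α)
    (hconn : ∀ a : α, (coverGraph a).Preconnected) :
    (flagGraph α).Connected := by
  have hflagne : Nonempty (Flag α) := by
    obtain ⟨s, hsc, _, hsg⟩ := aux_exists_lower_chain (⊤ : α)
    exact ⟨Flag.ofIsMaxChain s (aux_maxChain_of_grades hsc hsg)⟩
  rw [SimpleGraph.connected_iff]
  refine ⟨?_, hflagne⟩
  -- Main claim: flags agreeing on all grades `≥ k` are connected.
  have key : ∀ k, ∀ F F' : Flag α,
      (∀ x : α, k ≤ grade ℕ x → (x ∈ F ↔ x ∈ F')) → (flagGraph α).Reachable F F' := by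
    intro k
    induction k with
    | zero =>
      intro F F' h
      have : F = F' := Flag.ext (Set.ext fun x => h x (Nat.zero_le _))
      exact this ▸ SimpleGraph.Reachable.refl F
    | succ k ih =>
      intro F F' hagree
      by_cases hk : k + 1 ≤ grade ℕ (⊤ : α)
      · -- main case
        obtain ⟨a, haF, hag⟩ := aux_flag_exists_grade F (k + 1) hk
        have haF' : a ∈ F' := (hagree a (by omega)).mp haF
        obtain ⟨b, hbF, hbg⟩ := aux_flag_exists_grade F k (by omega)
        obtain ⟨b', hbF', hbg'⟩ := aux_flag_exists_grade F' k (by omega)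
        have hba : b ⋖ a := by
          refine aux_covBy_of_grade ?_ (by omega)
          rcases F.le_or_le hbF haF with h | h
          · exact lt_of_le_of_ne h (fun e => by rw [e] at hbg; omega)
          · exact absurd (grade_mono (𝕆 := ℕ) h) (by omega)
        have hba' : b' ⋖ a := by
          refine aux_covBy_of_grade ?_ (by omega)
          rcases F'.le_or_le hbF' haF' with h | h
          · exact lt_of_le_of_ne h (fun e => by rw [e] at hbg'; omega)
          · exact absurd (grade_mono (𝕆 := ℕ) h) (by omega)
        -- walk induction
        have walkstep : ∀ (c c' : {x : α // x ⋖ a}) (_ : (coverGraph a).Walk c c')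
            (F₁ F₂ : Flag α), a ∈ F₁ → a ∈ F₂ → (c : α) ∈ F₁ → (c' : α) ∈ F₂ →
            (∀ x : α, k + 1 ≤ grade ℕ x → (x ∈ F₁ ↔ x ∈ F₂)) →
            (flagGraph α).Reachable F₁ F₂ := by
          intro c c' w
          induction w with
          | nil =>
            rename_i c
            intro F₁ F₂ _ _ hc1 hc2 hag'
            have hcg : grade ℕ (c : α) = k := by
              have := aux_grade_covBy c.2; omega
            apply ih
            intro x hx
            rcases Nat.lt_or_ge (grade ℕ x) (k + 1) with hx' | hx'
            · have hxk : grade ℕ x = k := by omega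
              constructor
              · intro hxF
                have : x = (c : α) :=
                  aux_eq_of_chain_grade F₁.chain_le hxF hc1 (by omega)
                exact this ▸ hc2
              · intro hxF
                have : x = (c : α) :=
                  aux_eq_of_chain_grade F₂.chain_le hxF hc2 (by omega)
                exact this ▸ hc1
            · exact hag' x hx'
          | cons hadj w ihw =>
            rename_i c c₁ c'
            intro F₁ F₂ ha1 ha2 hc1 hc2 hag'
            obtain ⟨hne, hmg⟩ := hadj
            set m : α := (c : α) ⊓ (c₁ : α) with hmdef
            have hcg : grade ℕ (c : α) = k := by have := aux_grade_covBy c.2; omega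
            have hc1g : grade ℕ (c₁ : α) = k := by have := aux_grade_covBy c₁.2; omega
            have hmgk : grade ℕ m + 1 = k := by omega
            obtain ⟨s, hsc, hsle, hsg⟩ := aux_exists_lower_chain m
            -- upper part of F₁
            set U : Set α := {x : α | x ∈ F₁ ∧ k + 1 ≤ grade ℕ x} with hUdef
            have haU : a ∈ U := ⟨ha1, by omega⟩
            have hUge : ∀ x ∈ U, a ≤ x := by
              intro x hx
              rcases F₁.le_or_le ha1 hx.1 with h | h
              · exact h
              · have h1 : grade ℕ x ≤ k + 1 := hag ▸ grade_mono (𝕆 := ℕ) h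
                have hx2 : k + 1 ≤ grade ℕ x := hx.2
                have : x = a := aux_eq_of_chain_grade F₁.chain_le hx.1 ha1 (by omega)
                exact this.ge
            -- flag construction for an element e covered by a and above m
            have mkflag : ∀ e : α, m ≤ e → e ≤ a → grade ℕ e = k →
                IsMaxChain (· ≤ ·) (s ∪ {e} ∪ U) := by
              intro e hme hea heg
              have hsle' : ∀ y ∈ s, grade ℕ y ≤ k - 1 := by
                intro y hy
                have := grade_mono (𝕆 := ℕ) (hsle y hy)
                omega
              refine aux_maxChain_of_grades ?_ ?_
              · intro p hp q hq hpq
                have hcmp : ∀ r, r ∈ s ∪ {e} ∪ U → ∀ r', r' ∈ s ∪ {e} ∪ U →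
                    (r ∈ s ∪ {e} → r' ∈ U → r ≤ r') := by
                  intro r _ r' _ hr hr'
                  have hra : r ≤ a := by
                    rcases hr with hr | hr
                    · exact le_trans (hsle r hr) (le_trans hme hea)
                    · exact hr ▸ hea
                  exact le_trans hra (hUge r' hr')
                rcases hp with hp | hp <;> rcases hq with hq | hq
                · rcases hp with hp | hp <;> rcases hq with hq | hq
                  · exact hsc hp hq hpq
                  · exact Or.inl (le_trans (hsle p hp) (hq ▸ hme))
                  · exact Or.inr (le_trans (hsle q hq) (hp ▸ hme))
                  · exact absurd (hp.trans hq.symm) hpq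
                · exact Or.inl (hcmp p (Or.inl hp) q (Or.inr hq) hp hq)
                · exact Or.inr (hcmp q (Or.inl hq) p (Or.inr hp) hq hp)
                · exact F₁.chain_le hp.1 hq.1 hpq
              · intro j hj
                rcases Nat.lt_or_ge j k with hj' | hj'
                · obtain ⟨y, hy, hyg⟩ := hsg j (by omega)
                  exact ⟨y, Or.inl (Or.inl hy), hyg⟩
                · rcases Nat.lt_or_ge j (k + 1) with hj'' | hj''
                  · exact ⟨e, Or.inl (Or.inr rfl), by omega⟩
                  · obtain ⟨y, hy, hyg⟩ := aux_flag_exists_grade F₁ j hj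
                    exact ⟨y, Or.inr ⟨hy, by omega⟩, hyg⟩
            have hmc : m ≤ (c : α) := inf_le_left
            have hmc1 : m ≤ (c₁ : α) := inf_le_right
            set H : Flag α := Flag.ofIsMaxChain _ (mkflag (c : α) hmc c.2.1.le hcg) with hHdef
            set H' : Flag α :=
              Flag.ofIsMaxChain _ (mkflag (c₁ : α) hmc1 c₁.2.1.le hc1g) with hH'def
            have memH : ∀ x : α, x ∈ H ↔ x ∈ s ∨ x = (c : α) ∨ x ∈ U := by
              intro x
              show x ∈ s ∪ {(c : α)} ∪ U ↔ _
              simp only [Set.mem_union, Set.mem_singleton_iff]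
              tauto
            have memH' : ∀ x : α, x ∈ H' ↔ x ∈ s ∨ x = (c₁ : α) ∨ x ∈ U := by
              intro x
              show x ∈ s ∪ {(c₁ : α)} ∪ U ↔ _
              simp only [Set.mem_union, Set.mem_singleton_iff]
              tauto
            have hsgr : ∀ y ∈ s, grade ℕ y < k := by
              intro y hy
              have := grade_mono (𝕆 := ℕ) (hsle y hy)
              omega
            -- F₁ reachable to H
            have r1 : (flagGraph α).Reachable F₁ H := by
              apply ih
              intro x hx
              rcases Nat.lt_or_ge (grade ℕ x) (k + 1) with hx' | hx'
              · have hxk : grade ℕ x = k := by omega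
                rw [memH]
                constructor
                · intro hxF
                  have : x = (c : α) :=
                    aux_eq_of_chain_grade F₁.chain_le hxF hc1 (by omega)
                  exact Or.inr (Or.inl this)
                · rintro (hxs | rfl | hxU)
                  · exact absurd (hsgr x hxs) (by omega)
                  · exact hc1
                  · exact hxU.1
              · rw [memH]
                constructor
                · intro hxF
                  exact Or.inr (Or.inr ⟨hxF, hx'⟩)
                · rintro (hxs | rfl | hxU)
                  · exact absurd (hsgr x hxs) (by omega)
                  · omega
                  · exact hxU.1
            -- H adjacent to H'
            have hcne : (c : α) ≠ (c₁ : α) := fun h => hne (Subtype.ext h)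
            have hcH' : (c : α) ∉ H' := by
              rw [memH']
              rintro (hxs | h | hxU)
              · exact absurd (hsgr _ hxs) (by omega)
              · exact hcne h
              · have := hxU.2; omega
            have hc1H : (c₁ : α) ∉ H := by
              rw [memH]
              rintro (hxs | h | hxU)
              · exact absurd (hsgr _ hxs) (by omega)
              · exact hcne h.symm
              · have := hxU.2; omega
            have hdiff1 : (H : Set α) \ (H' : Set α) = {(c : α)} := by
              apply Set.eq_singleton_iff_unique_mem.mpr
              refine ⟨⟨(memH _).mpr (Or.inr (Or.inl rfl)), hcH'⟩, ?_⟩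
              rintro x ⟨hxH, hxH'⟩
              rcases (memH x).mp hxH with hxs | h | hxU
              · exact absurd ((memH' x).mpr (Or.inl hxs)) hxH'
              · exact h
              · exact absurd ((memH' x).mpr (Or.inr (Or.inr hxU))) hxH'
            have hdiff2 : (H' : Set α) \ (H : Set α) = {(c₁ : α)} := by
              apply Set.eq_singleton_iff_unique_mem.mpr
              refine ⟨⟨(memH' _).mpr (Or.inr (Or.inl rfl)), hc1H⟩, ?_⟩
              rintro x ⟨hxH', hxH⟩
              rcases (memH' x).mp hxH' with hxs | h | hxU
              · exact absurd ((memH x).mpr (Or.inl hxs)) hxH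
              · exact h
              · exact absurd ((memH x).mpr (Or.inr (Or.inr hxU))) hxH
            have r2 : (flagGraph α).Reachable H H' := by
              refine SimpleGraph.Adj.reachable ?_
              refine ⟨?_, by rw [hdiff1]; exact Set.ncard_singleton _,
                by rw [hdiff2]; exact Set.ncard_singleton _⟩
              intro h
              exact hcH' (h ▸ ((memH (c : α)).mpr (Or.inr (Or.inl rfl))))
            -- H' reachable to F₂ by walk induction hypothesis
            have r3 : (flagGraph α).Reachable H' F₂ := by
              refine ihw H' F₂ ((memH' a).mpr (Or.inr (Or.inr haU))) ha2
                ((memH' _).mpr (Or.inr (Or.inl rfl))) hc2 ?_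
              intro x hx
              rw [memH']
              constructor
              · rintro (hxs | rfl | hxU)
                · exact absurd (hsgr x hxs) (by omega)
                · omega
                · exact (hag' x hx).mp hxU.1
              · intro hxF
                exact Or.inr (Or.inr ⟨(hag' x hx).mpr hxF, hx⟩)
            exact (r1.trans r2).trans r3
        obtain ⟨w⟩ := hconn a ⟨b, hba⟩ ⟨b', hba'⟩
        exact walkstep ⟨b, hba⟩ ⟨b', hba'⟩ w F F' haF haF' hbF hbF'
          (fun x hx => hagree x hx)
      · -- degenerate case : agreement at grade ≥ k also holds
        apply ih
        intro x hx
        have h1 : grade ℕ x ≤ grade ℕ (⊤ : α) := grade_mono le_top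
        have h2 : grade ℕ x = grade ℕ (⊤ : α) := by omega
        have : x = ⊤ := by
          rcases lt_or_eq_of_le (le_top : x ≤ ⊤) with hlt | h
          · exact absurd (grade_strictMono (𝕆 := ℕ) hlt) (by omega)
          · exact h
        subst this
        exact ⟨fun _ => F'.top_mem, fun _ => F.top_mem⟩
  intro F F'
  apply key (grade ℕ (⊤ : α) + 1)
  intro x hx
  exact absurd (grade_mono (𝕆 := ℕ) (le_top : x ≤ ⊤)) (by omega)
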